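/- Let Z : [0,2π] → ℝ be continuous, K ∈ ℝ, ω > 0, and set r = 0 if K·Z(θ) ≥ 0 for all θ, and r = |min_{θ∈[0,2π]} K·Z(θ)| otherwise. Then there exists J* > 0 with ω + K·Z(θ)·J* > 0 for all θ ∈ [0,2π] and ∫₀^{2π} J*/(ω + K·Z(θ)·J*) dθ = 1 if and only if lim_{s→r⁺} ∫₀^{2π} 1/(K·Z(θ) + s) dθ > 1. Moreover, such J* is unique when it exists. -/

import Mathlib

open Real MeasureTheory Set Classical

namespace StationaryFluxAux

/-- The parametric integral `F s = ∫₀^{2π} 1/(a θ + s) dθ`. -/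
noncomputable def Fint (a : ℝ → ℝ) (s : ℝ) : ℝ :=
  ∫ θ in (0:ℝ)..(2 * π), 1 / (a θ + s)

variable {a : ℝ → ℝ} {r : ℝ}

lemma denom_pos (hlow : ∀ θ ∈ Icc (0:ℝ) (2 * π), -r ≤ a θ) {s : ℝ} (hs : r < s)
    {θ : ℝ} (hθ : θ ∈ Icc (0:ℝ) (2 * π)) : 0 < a θ + s := by
  have := hlow θ hθ; linarith

lemma integrable (ha : ContinuousOn a (Icc 0 (2 * π)))
    (hlow : ∀ θ ∈ Icc (0:ℝ) (2 * π), -r ≤ a θ) {s : ℝ} (hs : r < s) :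
    IntervalIntegrable (fun θ => 1 / (a θ + s)) volume 0 (2 * π) := by
  apply ContinuousOn.intervalIntegrable
  rw [uIcc_of_le (by positivity)]
  exact continuousOn_const.div (ha.add continuousOn_const)
    (fun θ hθ => (denom_pos hlow hs hθ).ne')

lemma F_strictAnti (ha : ContinuousOn a (Icc 0 (2 * π)))
    (hlow : ∀ θ ∈ Icc (0:ℝ) (2 * π), -r ≤ a θ) {s s' : ℝ} (hs : r < s) (hss : s < s') :
    Fint a s' < Fint a s := by
  have hs' : r < s' := hs.trans hss
  have h1 := integrable ha hlow hs
  have h2 := integrable ha hlow hs'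
  have key : 0 < ∫ θ in (0:ℝ)..(2 * π), (1 / (a θ + s) - 1 / (a θ + s')) := by
    apply intervalIntegral.intervalIntegral_pos_of_pos_on (h1.sub h2)
    · intro x hx
      have hx' : x ∈ Icc (0:ℝ) (2 * π) := Ioo_subset_Icc_self hx
      have d1 := denom_pos hlow hs hx'
      have d2 := denom_pos hlow hs' hx'
      have : 1 / (a x + s') < 1 / (a x + s) :=
        one_div_lt_one_div_of_lt d1 (by linarith)
      linarith
    · positivity
  rw [intervalIntegral.integral_sub h1 h2] at key
  have : Fint a s - Fint a s' = (∫ θ in (0:ℝ)..(2 * π), 1 / (a θ + s)) -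
      ∫ θ in (0:ℝ)..(2 * π), 1 / (a θ + s') := rfl
  unfold Fint
  linarith

lemma F_le (ha : ContinuousOn a (Icc 0 (2 * π)))
    (hlow : ∀ θ ∈ Icc (0:ℝ) (2 * π), -r ≤ a θ) {s : ℝ} (hs : r < s) :
    Fint a s ≤ (2 * π) / (s - r) := by
  have h : ∀ x ∈ Set.uIoc (0:ℝ) (2 * π), ‖1 / (a x + s)‖ ≤ 1 / (s - r) := by
    intro x hx
    have hx' : x ∈ Icc (0:ℝ) (2 * π) := by
      rw [uIoc_of_le (by positivity)] at hx; exact Ioc_subset_Icc_self hx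
    have d := denom_pos hlow hs hx'
    have h2 : s - r ≤ a x + s := by have := hlow x hx'; linarith
    rw [Real.norm_eq_abs, abs_of_pos (by positivity)]
    exact one_div_le_one_div_of_le (by linarith) h2
  have h3 := intervalIntegral.norm_integral_le_of_norm_le_const h
  rw [Real.norm_eq_abs, sub_zero, abs_of_nonneg (by positivity : (0:ℝ) ≤ 2 * π)] at h3
  have h4 : (1 / (s - r)) * (2 * π) = (2 * π) / (s - r) := by ring
  calc Fint a s ≤ |Fint a s| := le_abs_self _
    _ ≤ (1 / (s - r)) * (2 * π) := h3
    _ = (2 * π) / (s - r) := h4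

lemma F_continuousOn (ha : ContinuousOn a (Icc 0 (2 * π)))
    (hlow : ∀ θ ∈ Icc (0:ℝ) (2 * π), -r ≤ a θ) {s₁ : ℝ} (hs₁ : r < s₁) :
    ContinuousOn (Fint a) (Ici s₁) := by
  have hsub : (0:ℝ) < s₁ - r := by linarith
  have hd2 : (0:ℝ) < (s₁ - r) ^ 2 := by positivity
  set C : ℝ := (2 * π) / (s₁ - r) ^ 2 with hC_def
  have hC : 0 ≤ C := by rw [hC_def]; positivity
  apply LipschitzOnWith.continuousOn (K := Real.toNNReal C)
  apply LipschitzOnWith.of_dist_le_mul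
  intro s hs t ht
  have hss : s₁ ≤ s := hs
  have hst : s₁ ≤ t := ht
  have hs' : r < s := lt_of_lt_of_le hs₁ hss
  have ht' : r < t := lt_of_lt_of_le hs₁ hst
  have key : ∀ x ∈ Set.uIoc (0:ℝ) (2 * π),
      ‖1 / (a x + s) - 1 / (a x + t)‖ ≤ |s - t| / (s₁ - r) ^ 2 := by
    intro x hx
    have hx' : x ∈ Icc (0:ℝ) (2 * π) := by
      rw [uIoc_of_le (by positivity)] at hx; exact Ioc_subset_Icc_self hx
    have d1 := denom_pos hlow hs' hx'
    have d2 := denom_pos hlow ht' hx'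
    have b1 : s₁ - r ≤ a x + s := by have := hlow x hx'; linarith
    have b2 : s₁ - r ≤ a x + t := by have := hlow x hx'; linarith
    have heq : 1 / (a x + s) - 1 / (a x + t) = (t - s) / ((a x + s) * (a x + t)) := by
      field_simp
      ring
    rw [heq, Real.norm_eq_abs, abs_div]
    have hprod : (s₁ - r) ^ 2 ≤ |(a x + s) * (a x + t)| := by
      rw [abs_of_pos (by positivity)]; nlinarith
    calc |t - s| / |(a x + s) * (a x + t)| ≤ |t - s| / (s₁ - r) ^ 2 := by
          apply div_le_div_of_nonneg_left (abs_nonneg _) hd2 hprod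
      _ = |s - t| / (s₁ - r) ^ 2 := by rw [abs_sub_comm]
  have h1 := integrable ha hlow hs'
  have h2 := integrable ha hlow ht'
  have h3 := intervalIntegral.norm_integral_le_of_norm_le_const key
  rw [intervalIntegral.integral_sub h1 h2, Real.norm_eq_abs, sub_zero,
    abs_of_nonneg (by positivity : (0:ℝ) ≤ 2 * π)] at h3
  have hdist : dist (Fint a s) (Fint a t) =
      |(∫ θ in (0:ℝ)..(2 * π), 1 / (a θ + s)) - ∫ θ in (0:ℝ)..(2 * π), 1 / (a θ + t)| :=
    Real.dist_eq _ _
  rw [hdist]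
  have hcoe : (Real.toNNReal C : ℝ) = C := Real.coe_toNNReal C hC
  calc |(∫ θ in (0:ℝ)..(2 * π), 1 / (a θ + s)) - ∫ θ in (0:ℝ)..(2 * π), 1 / (a θ + t)|
      ≤ |s - t| / (s₁ - r) ^ 2 * (2 * π) := h3
    _ = C * |s - t| := by rw [hC_def]; ring
    _ = (Real.toNNReal C : ℝ) * dist s t := by rw [hcoe, Real.dist_eq]

end StationaryFluxAux

open StationaryFluxAux

/-- Existence and uniqueness of the stationary flux `J*` for the asynchronous
state: a `J* > 0` with positive velocity and normalized stationary density
exists iff the limit `L` of `∫₀^{2π} 1/(K·Z θ + s) dθ` as `s → r⁺`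
(taken in `EReal`, so it may be `+∞`) exceeds `1`. -/
theorem stationary_flux_exists_unique_iff
    (Z : ℝ → ℝ) (K ω : ℝ) (hω : 0 < ω)
    (hZ : ContinuousOn Z (Icc 0 (2 * π)))
    (r : ℝ)
    (hr : r = if ∀ θ ∈ Icc (0:ℝ) (2 * π), 0 ≤ K * Z θ then 0
        else |sInf ((fun θ => K * Z θ) '' Icc (0:ℝ) (2 * π))|)
    (L : EReal)
    (hL : Filter.Tendsto
      (fun s : ℝ => (((∫ θ in (0:ℝ)..(2 * π), 1 / (K * Z θ + s) : ℝ)) : EReal))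
      (nhdsWithin r (Ioi r)) (nhds L)) :
    (∃! J : ℝ, 0 < J ∧ (∀ θ ∈ Icc (0:ℝ) (2 * π), 0 < ω + K * Z θ * J) ∧
        ∫ θ in (0:ℝ)..(2 * π), J / (ω + K * Z θ * J) = 1)
      ↔ (1 : EReal) < L := by
  have h2π : (0:ℝ) < 2 * π := by positivity
  have ha : ContinuousOn (fun θ => K * Z θ) (Icc 0 (2 * π)) := continuousOn_const.mul hZ
  have hne : (Icc (0:ℝ) (2 * π)).Nonempty := ⟨0, le_refl 0, le_of_lt h2π⟩
  obtain ⟨θm, hθm, hminOn⟩ := isCompact_Icc.exists_isMinOn hne ha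
  have hmin : ∀ x ∈ Icc (0:ℝ) (2 * π), K * Z θm ≤ K * Z x := fun x hx => hminOn hx
  have hL' : Filter.Tendsto (fun s : ℝ => ((Fint (fun θ => K * Z θ) s : ℝ) : EReal))
      (nhdsWithin r (Ioi r)) (nhds L) := hL
  -- basic properties of r
  have hrprops : 0 ≤ r ∧ (∀ θ ∈ Icc (0:ℝ) (2 * π), -r ≤ K * Z θ) ∧
      (∀ s : ℝ, 0 < s → (∀ θ ∈ Icc (0:ℝ) (2 * π), 0 < K * Z θ + s) → r < s) := by
    by_cases hc : ∀ θ ∈ Icc (0:ℝ) (2 * π), 0 ≤ K * Z θ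
    · rw [if_pos hc] at hr
      refine ⟨by rw [hr], fun θ hθ => by rw [hr]; simpa using hc θ hθ,
        fun s hs _ => by rw [hr]; exact hs⟩
    · rw [if_neg hc] at hr
      push_neg at hc
      obtain ⟨θ₀, hθ₀, hneg⟩ := hc
      have hleast : IsLeast ((fun θ => K * Z θ) '' Icc (0:ℝ) (2 * π)) (K * Z θm) := by
        constructor
        · exact ⟨θm, hθm, rfl⟩
        · rintro y ⟨θ, hθ, rfl⟩; exact hmin θ hθ
      have hmneg : K * Z θm < 0 := lt_of_le_of_lt (hmin θ₀ hθ₀) hneg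
      rw [hleast.csInf_eq, abs_of_neg hmneg] at hr
      refine ⟨by rw [hr]; linarith, fun θ hθ => by rw [hr]; simpa using hmin θ hθ, ?_⟩
      intro s hs hpos
      have := hpos θm hθm
      rw [hr]; linarith
  obtain ⟨hr0, hlow, hrlt⟩ := hrprops
  -- characterization of the stationary-flux condition via s = ω / J
  have hchar : ∀ J : ℝ, 0 < J →
      (((∀ θ ∈ Icc (0:ℝ) (2 * π), 0 < ω + K * Z θ * J) ∧
        (∫ θ in (0:ℝ)..(2 * π), J / (ω + K * Z θ * J)) = 1)
      ↔ (r < ω / J ∧ Fint (fun θ => K * Z θ) (ω / J) = 1)) := by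
    intro J hJ
    have hJ0 : J ≠ 0 := hJ.ne'
    have hsJ : 0 < ω / J := div_pos hω hJ
    have hposiff : (∀ θ ∈ Icc (0:ℝ) (2 * π), 0 < ω + K * Z θ * J) ↔
        (∀ θ ∈ Icc (0:ℝ) (2 * π), 0 < K * Z θ + ω / J) := by
      apply forall₂_congr; intro θ hθ
      constructor
      · intro h
        have h1 : 0 < (ω + K * Z θ * J) / J := div_pos h hJ
        have heq : (ω + K * Z θ * J) / J = K * Z θ + ω / J := by field_simp; ring
        rwa [heq] at h1
      · intro h
        have h1 : 0 < (K * Z θ + ω / J) * J := mul_pos h hJ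
        have heq : (K * Z θ + ω / J) * J = ω + K * Z θ * J := by field_simp; ring
        rwa [heq] at h1
    have hint : (∀ θ ∈ Icc (0:ℝ) (2 * π), 0 < K * Z θ + ω / J) →
        (∫ θ in (0:ℝ)..(2 * π), J / (ω + K * Z θ * J)) = Fint (fun θ => K * Z θ) (ω / J) := by
      intro hp
      apply intervalIntegral.integral_congr
      intro θ hθ
      have hθ' : θ ∈ Icc (0:ℝ) (2 * π) := by rwa [uIcc_of_le (le_of_lt h2π)] at hθ
      have hd : 0 < K * Z θ + ω / J := hp θ hθ'
      have hd' : 0 < ω + K * Z θ * J := by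
        have h1 : 0 < (K * Z θ + ω / J) * J := mul_pos hd hJ
        have heq : (K * Z θ + ω / J) * J = ω + K * Z θ * J := by field_simp; ring
        rwa [heq] at h1
      show J / (ω + K * Z θ * J) = 1 / (K * Z θ + ω / J)
      rw [div_eq_div_iff hd'.ne' hd.ne']
      field_simp
      ring
    constructor
    · rintro ⟨hpos, hI⟩
      have hpos' := hposiff.mp hpos
      have hrs : r < ω / J := hrlt _ hsJ hpos'
      exact ⟨hrs, by rw [← hint hpos']; exact hI⟩
    · rintro ⟨hrs, hI⟩
      have hpos' : ∀ θ ∈ Icc (0:ℝ) (2 * π), 0 < K * Z θ + ω / J := fun θ hθ => by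
        have := hlow θ hθ; linarith
      exact ⟨hposiff.mpr hpos', by rw [hint hpos']; exact hI⟩
  constructor
  · -- existence implies 1 < L
    rintro ⟨J, ⟨hJ, hJprops⟩, -⟩
    obtain ⟨hrs, hFs⟩ := (hchar J hJ).mp hJprops
    set s' : ℝ := ω / J with hs'_def
    have hs1 : r < (r + s') / 2 := by linarith
    have hs2 : (r + s') / 2 < s' := by linarith
    have hF1 : 1 < Fint (fun θ => K * Z θ) ((r + s') / 2) := by
      rw [← hFs]; exact F_strictAnti ha hlow hs1 hs2
    have hev : ∀ᶠ s in nhdsWithin r (Ioi r),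
        ((Fint (fun θ => K * Z θ) ((r + s') / 2) : ℝ) : EReal) ≤
          ((Fint (fun θ => K * Z θ) s : ℝ) : EReal) := by
      filter_upwards [Ioo_mem_nhdsGT_of_mem (⟨le_refl r, hs1⟩ : r ∈ Ico r ((r + s') / 2))]
        with s hs
      exact EReal.coe_le_coe_iff.mpr (le_of_lt (F_strictAnti ha hlow hs.1 hs.2))
    have hle : ((Fint (fun θ => K * Z θ) ((r + s') / 2) : ℝ) : EReal) ≤ L :=
      ge_of_tendsto hL' hev
    calc (1 : EReal) = ((1 : ℝ) : EReal) := by norm_num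
      _ < ((Fint (fun θ => K * Z θ) ((r + s') / 2) : ℝ) : EReal) :=
          EReal.coe_lt_coe_iff.mpr hF1
      _ ≤ L := hle
  · -- 1 < L implies existence and uniqueness
    intro hLgt
    have hev : ∀ᶠ s in nhdsWithin r (Ioi r),
        (1 : EReal) < ((Fint (fun θ => K * Z θ) s : ℝ) : EReal) :=
      hL'.eventually (isOpen_Ioi.mem_nhds hLgt)
    obtain ⟨s₁, hs₁F, hs₁r⟩ := (hev.and eventually_mem_nhdsWithin).exists
    have hs₁r : r < s₁ := hs₁r
    have hF1 : 1 < Fint (fun θ => K * Z θ) s₁ := by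
      have := hs₁F
      rw [show (1 : EReal) = ((1 : ℝ) : EReal) from rfl, EReal.coe_lt_coe_iff] at this
      exact this
    set s₂ : ℝ := max s₁ (r + 2 * π + 1) with hs₂_def
    have hs₂r : r < s₂ := lt_of_lt_of_le (by linarith) (le_max_right _ _)
    have hs₁₂ : s₁ ≤ s₂ := le_max_left _ _
    have hF2 : Fint (fun θ => K * Z θ) s₂ < 1 := by
      have hb := F_le ha hlow hs₂r
      have hlt : (2 * π) / (s₂ - r) < 1 := by
        rw [div_lt_one (by linarith)]
        have := le_max_right s₁ (r + 2 * π + 1)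
        have : r + 2 * π + 1 ≤ s₂ := this
        linarith
      linarith
    have hcont : ContinuousOn (Fint (fun θ => K * Z θ)) (Icc s₁ s₂) :=
      (F_continuousOn ha hlow hs₁r).mono Icc_subset_Ici_self
    have h1mem : (1:ℝ) ∈ Icc (Fint (fun θ => K * Z θ) s₂) (Fint (fun θ => K * Z θ) s₁) :=
      ⟨le_of_lt hF2, le_of_lt hF1⟩
    obtain ⟨sstar, hsmem, hseq⟩ := intermediate_value_Icc' hs₁₂ hcont h1mem
    have hsr : r < sstar := lt_of_lt_of_le hs₁r hsmem.1
    have hspos : 0 < sstar := lt_of_le_of_lt hr0 hsr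
    have hcancel : ω / (ω / sstar) = sstar := div_div_cancel₀ hω.ne'
    refine ⟨ω / sstar, ⟨div_pos hω hspos, ?_⟩, ?_⟩
    · exact (hchar (ω / sstar) (div_pos hω hspos)).mpr
        ⟨by rw [hcancel]; exact hsr, by rw [hcancel]; exact hseq⟩
    · rintro J' ⟨hJ', hprops'⟩
      obtain ⟨hrs', hFs'⟩ := (hchar J' hJ').mp hprops'
      have heq : ω / J' = sstar := by
        rcases lt_trichotomy (ω / J') sstar with h | h | h
        · exfalso
          have := F_strictAnti ha hlow hrs' h
          rw [hseq, hFs'] at this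
          exact lt_irrefl 1 this
        · exact h
        · exfalso
          have := F_strictAnti ha hlow hsr h
          rw [hseq, hFs'] at this
          exact lt_irrefl 1 this
      rw [← heq, div_div_cancel₀ hω.ne']
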